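/- Let $H : [0,1] \to [0,1]^d$ be the Hilbert space-filling curve and let $A = H([p,q])$ for $0 \le p < q \le 1$. Then the $d$-dimensional Lebesgue measure of $A$ equals $q - p$, and if $x \sim \mathrm{Unif}([p,q])$ then $H(x) \sim \mathrm{Unif}(A)$. -/

import Mathlib

open MeasureTheory ProbabilityTheory Filter Topology
open scoped NNReal ENNReal

/-- The unit cube `[0,1]^d` in Euclidean space. -/
def unitCube (d : ℕ) : Set (EuclideanSpace ℝ (Fin d)) :=
  (WithLp.ofLp : EuclideanSpace ℝ (Fin d) → (Fin d → ℝ)) ⁻¹' Set.univ.pi fun _ => Set.Icc (0 : ℝ) 1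

/-- The uniform distribution on a set `E` of Euclidean space. -/
noncomputable def unifOn {d : ℕ} (E : Set (EuclideanSpace ℝ (Fin d))) :
    Measure (EuclideanSpace ℝ (Fin d)) :=
  (volume E)⁻¹ • volume.restrict E

/-- The uniform distribution on a set of reals. -/
noncomputable def unifOnReal (I : Set ℝ) : Measure ℝ :=
  (volume I)⁻¹ • volume.restrict I

/-- A predicate capturing the defining recursive property of the `d`-dimensional Hilbert
space-filling curve: it is a continuous surjection from `[0,1]` onto `[0,1]^d` mapping each
dyadic interval of length `2^(-dm)` onto an axis-parallel subcube of side `2^(-m)`. -/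
def IsHilbertCurve (d : ℕ) (H : ℝ → EuclideanSpace ℝ (Fin d)) : Prop :=
  Continuous H ∧
  H '' Set.Icc (0 : ℝ) 1 = unitCube d ∧
  ∀ m k : ℕ, k < 2 ^ (d * m) →
    ∃ a : EuclideanSpace ℝ (Fin d),
      H '' Set.Icc ((k : ℝ) / 2 ^ (d * m)) (((k : ℝ) + 1) / 2 ^ (d * m)) =
        (WithLp.ofLp : EuclideanSpace ℝ (Fin d) → (Fin d → ℝ)) ⁻¹'
          Set.univ.pi fun i => Set.Icc (a i) (a i + (1 : ℝ) / 2 ^ m)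

noncomputable def dI (d m k : ℕ) : Set ℝ :=
  Set.Icc ((k : ℝ) / 2 ^ (d * m)) (((k : ℝ) + 1) / 2 ^ (d * m))

lemma vol_dI (d m k : ℕ) : volume (dI d m k) = ((2:ℝ≥0∞) ^ (d*m))⁻¹ := by
  rw [dI, Real.volume_Icc]
  have h : ((k:ℝ)+1)/2^(d*m) - (k:ℝ)/2^(d*m) = ((2:ℝ)^(d*m))⁻¹ := by field_simp; ring
  rw [h, ENNReal.ofReal_inv_of_pos (by positivity), ENNReal.ofReal_pow (by norm_num)]
  norm_num

lemma dI_child (d m k : ℕ) {t : ℝ} (hk : k < 2^(d*m)) (ht : t ∈ dI d m k) :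
    ∃ k' < 2^(d*(m+1)), t ∈ dI d (m+1) k' ∧ dI d (m+1) k' ⊆ dI d m k := by
  have hc1 : 1 ≤ 2^d := Nat.one_le_two_pow
  have hck1 : 1 ≤ 2^d*(k+1) := le_trans hc1 (Nat.le_mul_of_pos_right _ (by omega))
  have hD : (0:ℝ) < 2^(d*m) := by positivity
  have hD' : (0:ℝ) < 2^(d*(m+1)) := by positivity
  have hDcast : ((2:ℝ))^(d*(m+1)) = 2^(d*m) * 2^d := by
    rw [mul_add, mul_one, pow_add]
  set x : ℝ := t * 2^(d*(m+1)) with hxdef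
  have hx0 : ((2^d*k : ℕ) : ℝ) ≤ x := by
    have h1 : (k:ℝ) ≤ t * 2^(d*m) := by
      have := ht.1; rw [div_le_iff₀ hD] at this; linarith
    have : ((2^d*k : ℕ):ℝ) = (k:ℝ) * 2^d := by push_cast; ring
    rw [this, hxdef, hDcast]
    nlinarith [h1, (by positivity : (0:ℝ) < (2:ℝ)^d)]
  have hx1 : x ≤ ((2^d*(k+1) : ℕ) : ℝ) := by
    have h2 : t * 2^(d*m) ≤ (k:ℝ)+1 := by
      have := ht.2; rw [le_div_iff₀ hD] at this; linarith
    have he : ((2^d*(k+1) : ℕ):ℝ) = ((k:ℝ)+1) * 2^d := by push_cast; ring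
    rw [he, hxdef, hDcast]
    nlinarith [h2, (by positivity : (0:ℝ) < (2:ℝ)^d)]
  refine ⟨min ⌊x⌋₊ (2^d*(k+1) - 1), ?_, ?_, ?_⟩
  · calc min ⌊x⌋₊ (2^d*(k+1)-1) ≤ 2^d*(k+1)-1 := min_le_right _ _
    _ < 2^d*(k+1) := Nat.sub_lt (by omega) one_pos
    _ ≤ 2^d * 2^(d*m) := Nat.mul_le_mul_left _ hk
    _ = 2^(d*(m+1)) := by rw [← pow_add]; ring_nf
  · constructor
    · rw [div_le_iff₀ hD']
      have h1 : ((min ⌊x⌋₊ (2^d*(k+1)-1) : ℕ) : ℝ) ≤ (⌊x⌋₊ : ℝ) := by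
        exact_mod_cast min_le_left _ _
      have h2 : (⌊x⌋₊ : ℝ) ≤ x := Nat.floor_le (le_trans (by positivity) hx0)
      rw [← hxdef]; linarith
    · rw [le_div_iff₀ hD', ← hxdef]
      by_cases hcase : ⌊x⌋₊ ≤ 2^d*(k+1) - 1
      · rw [min_eq_left hcase]
        have := Nat.lt_floor_add_one x
        linarith
      · rw [min_eq_right (le_of_not_ge hcase)]
        rw [Nat.cast_sub hck1]
        push_cast
        push_cast at hx1
        linarith
  · apply Set.Icc_subset_Icc
    · rw [div_le_div_iff₀ hD hD', hDcast]
      have g1 : 2^d*k ≤ ⌊x⌋₊ := Nat.le_floor (by exact_mod_cast hx0)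
      have g2 : 2^d*k ≤ 2^d*(k+1)-1 := by rw [Nat.mul_succ]; omega
      have : ((2^d*k : ℕ) : ℝ) ≤ ((min ⌊x⌋₊ (2^d*(k+1)-1) : ℕ) : ℝ) := by
        exact_mod_cast le_min g1 g2
      push_cast at this ⊢
      nlinarith
    · rw [div_le_div_iff₀ hD' hD, hDcast]
      have h3 : min ⌊x⌋₊ (2^d*(k+1)-1) + 1 ≤ 2^d*(k+1) := by
        have := min_le_right ⌊x⌋₊ (2^d*(k+1)-1); omega
      have : ((min ⌊x⌋₊ (2^d*(k+1)-1) : ℕ) : ℝ) + 1 ≤ ((2^d*(k+1) : ℕ) : ℝ) := by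
        exact_mod_cast h3
      push_cast at this ⊢
      nlinarith

lemma dI_cover (d m : ℕ) {t : ℝ} (ht : t ∈ Set.Icc (0:ℝ) 1) :
    ∃ k < 2^(d*m), t ∈ dI d m k := by
  induction m with
  | zero => exact ⟨0, by norm_num, by simpa [dI] using ht⟩
  | succ n ih =>
      obtain ⟨k, hk, htk⟩ := ih
      obtain ⟨k', h1, h2, _⟩ := dI_child d n k hk htk
      exact ⟨k', h1, h2⟩

lemma dI_sub_unit (d m k : ℕ) (hk : k < 2^(d*m)) : dI d m k ⊆ Set.Icc (0:ℝ) 1 := by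
  have hD : (0:ℝ) < 2^(d*m) := by positivity
  apply Set.Icc_subset_Icc
  · positivity
  · rw [div_le_one hD]
    have : ((k:ℝ)+1) ≤ ((2^(d*m) : ℕ) : ℝ) := by exact_mod_cast hk
    push_cast at this ⊢; linarith

lemma vol_box (d : ℕ) (a b : EuclideanSpace ℝ (Fin d)) :
    (volume : Measure (EuclideanSpace ℝ (Fin d)))
      ((WithLp.ofLp : EuclideanSpace ℝ (Fin d) → (Fin d → ℝ)) ⁻¹'
        Set.univ.pi fun i => Set.Icc (a i) (b i)) = ∏ i, ENNReal.ofReal (b i - a i) := by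
  have h := (PiLp.volume_preserving_ofLp (ι := Fin d)).measure_preimage
    (s := (Set.univ.pi fun i => Set.Icc (a i) (b i) : Set (Fin d → ℝ)))
    (MeasurableSet.univ_pi fun _ => measurableSet_Icc).nullMeasurableSet
  rw [h, volume_pi_pi]
  simp [Real.volume_Icc]

lemma vol_unitCube (d : ℕ) : volume (unitCube d) = 1 := by
  have := vol_box d (WithLp.toLp 2 (fun _ => 0)) (WithLp.toLp 2 (fun _ => 1))
  rw [unitCube]
  refine this.trans ?_
  simp

lemma ofReal_inv_two_pow (n : ℕ) : ENNReal.ofReal ((1:ℝ)/2^n) = ((2:ℝ≥0∞)^n)⁻¹ := by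
  rw [one_div, ENNReal.ofReal_inv_of_pos (by positivity), ENNReal.ofReal_pow (by norm_num)]
  norm_num

section Main
variable {d : ℕ} {H : ℝ → EuclideanSpace ℝ (Fin d)}

lemma img_dI (hH : IsHilbertCurve d H) (m k : ℕ) (hk : k < 2^(d*m)) :
    volume (H '' dI d m k) = ((2:ℝ≥0∞) ^ (d*m))⁻¹ := by
  obtain ⟨a, ha⟩ := hH.2.2 m k hk
  have hb := vol_box d a (WithLp.toLp 2 (fun i => a i + (1:ℝ)/2^m))
  simp only [WithLp.ofLp_toLp] at hb
  rw [dI, ha, hb]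
  simp only [add_sub_cancel_left, Finset.prod_const, Finset.card_univ, Fintype.card_fin]
  rw [ofReal_inv_two_pow, ← ENNReal.inv_pow, ← pow_mul, mul_comm]

lemma img_dI_sub_unit (hH : IsHilbertCurve d H) (m k : ℕ) (hk : k < 2^(d*m)) :
    H '' dI d m k ⊆ unitCube d := by
  rw [← hH.2.1]
  exact Set.image_mono (dI_sub_unit d m k hk)

/-- aggregate lower bound: a family of same-level cubes has measure at least card/N. -/
lemma cubes_lower (hH : IsHilbertCurve d H) (m : ℕ) (S : Finset ℕ)
    (hS : S ⊆ Finset.range (2^(d*m))) :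
    (S.card : ℝ≥0∞) * ((2:ℝ≥0∞)^(d*m))⁻¹ ≤ volume (⋃ k ∈ S, H '' dI d m k) := by
  set N := 2^(d*m) with hN
  set T := Finset.range N \ S with hT
  have hcardT : T.card = N - S.card := by
    rw [hT, Finset.card_sdiff_of_subset hS, Finset.card_range]
  have hcardS : S.card ≤ N := by
    simpa using Finset.card_le_card hS
  have hsub : unitCube d ⊆ (⋃ k ∈ S, H '' dI d m k) ∪ (⋃ k ∈ T, H '' dI d m k) := by
    rw [← hH.2.1]
    rintro x ⟨t, ht, rfl⟩
    obtain ⟨k, hk, htk⟩ := dI_cover d m ht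
    by_cases hks : k ∈ S
    · exact Or.inl (Set.mem_biUnion hks ⟨t, htk, rfl⟩)
    · refine Or.inr (Set.mem_biUnion ?_ ⟨t, htk, rfl⟩)
      exact Finset.mem_sdiff.mpr ⟨Finset.mem_range.mpr hk, hks⟩
  have hTbound : volume (⋃ k ∈ T, H '' dI d m k) ≤ (T.card : ℝ≥0∞) * ((2:ℝ≥0∞)^(d*m))⁻¹ := by
    refine (measure_biUnion_finset_le T _).trans ?_
    have : ∀ k ∈ T, volume (H '' dI d m k) = ((2:ℝ≥0∞)^(d*m))⁻¹ := by
      intro k hk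
      exact img_dI hH m k (by have := (Finset.mem_sdiff.mp hk).1; rwa [Finset.mem_range] at this)
    rw [Finset.sum_congr rfl this, Finset.sum_const, nsmul_eq_mul]
  have h1 : (1:ℝ≥0∞) ≤ volume (⋃ k ∈ S, H '' dI d m k) + (T.card : ℝ≥0∞) * ((2:ℝ≥0∞)^(d*m))⁻¹ := by
    calc (1:ℝ≥0∞) = volume (unitCube d) := (vol_unitCube d).symm
    _ ≤ volume ((⋃ k ∈ S, H '' dI d m k) ∪ (⋃ k ∈ T, H '' dI d m k)) := measure_mono hsub
    _ ≤ volume (⋃ k ∈ S, H '' dI d m k) + volume (⋃ k ∈ T, H '' dI d m k) := measure_union_le _ _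
    _ ≤ _ := by gcongr
  have hsum : (S.card : ℝ≥0∞) * ((2:ℝ≥0∞)^(d*m))⁻¹ + (T.card : ℝ≥0∞) * ((2:ℝ≥0∞)^(d*m))⁻¹ = 1 := by
    rw [← add_mul]
    have : (S.card : ℝ≥0∞) + (T.card : ℝ≥0∞) = (N : ℝ≥0∞) := by
      rw [hcardT]
      norm_cast
      omega
    rw [this]
    have hNcast : (N : ℝ≥0∞) = (2:ℝ≥0∞)^(d*m) := by rw [hN]; push_cast; rfl
    rw [hNcast, ENNReal.mul_inv_cancel (by positivity) (by simp)]
  have hfin : (T.card : ℝ≥0∞) * ((2:ℝ≥0∞)^(d*m))⁻¹ ≠ ⊤ := by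
    exact ENNReal.mul_ne_top (by simp) (by simp)
  rw [← ENNReal.add_le_add_iff_right hfin, hsum]
  exact h1


lemma img_upper (hd : 1 ≤ d) (hH : IsHilbertCurve d H) (p q : ℝ) (hp : 0 ≤ p)
    (hpq : p ≤ q) (hq : q ≤ 1) :
    volume (H '' Set.Icc p q) ≤ ENNReal.ofReal (q - p) := by
  classical
  have key : ∀ m : ℕ, volume (H '' Set.Icc p q)
      ≤ ENNReal.ofReal (q - p) + ENNReal.ofReal (2 * (1/2^(d*m))) := by
    intro m
    have hD : (0:ℝ) < 2^(d*m) := by positivity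
    set S : Finset ℕ := (Finset.range (2^(d*m))).filter
      (fun k => p ≤ ((k:ℝ)+1)/2^(d*m) ∧ (k:ℝ)/2^(d*m) ≤ q) with hSdef
    have hcover : H '' Set.Icc p q ⊆ ⋃ k ∈ S, H '' dI d m k := by
      rintro x ⟨t, ht, rfl⟩
      have ht01 : t ∈ Set.Icc (0:ℝ) 1 := ⟨le_trans hp ht.1, le_trans ht.2 hq⟩
      obtain ⟨k, hk, htk⟩ := dI_cover d m ht01
      have hkS : k ∈ S := Finset.mem_filter.mpr
        ⟨Finset.mem_range.mpr hk, le_trans ht.1 htk.2, le_trans htk.1 ht.2⟩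
      exact Set.mem_biUnion (Finset.mem_coe.mpr hkS) ⟨t, htk, rfl⟩
    have h1 : volume (H '' Set.Icc p q) ≤ (S.card : ℝ≥0∞) * ((2:ℝ≥0∞)^(d*m))⁻¹ := by
      refine (measure_mono hcover).trans ?_
      refine (measure_biUnion_finset_le S _).trans ?_
      have : ∀ k ∈ S, volume (H '' dI d m k) = ((2:ℝ≥0∞)^(d*m))⁻¹ := fun k hk =>
        img_dI hH m k (Finset.mem_range.mp (Finset.mem_filter.mp hk).1)
      rw [Finset.sum_congr rfl this, Finset.sum_const, nsmul_eq_mul]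
    have h2 : (S.card : ℝ≥0∞) * ((2:ℝ≥0∞)^(d*m))⁻¹
        ≤ ENNReal.ofReal (q - p + 2 * (1/2^(d*m))) := by
      have hdisj : (↑S : Set ℕ).PairwiseDisjoint
          (fun k : ℕ => Set.Ioo ((k:ℝ)/2^(d*m)) (((k:ℝ)+1)/2^(d*m))) := by
        intro j _ k _ hjk
        rw [Function.onFun, Set.Ioo_disjoint_Ioo]
        rcases lt_or_gt_of_ne hjk with h | h
        · have hjk' : ((j:ℝ)+1) ≤ (k:ℝ) := by exact_mod_cast h
          calc min (((j:ℝ)+1)/2^(d*m)) (((k:ℝ)+1)/2^(d*m))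
              ≤ ((j:ℝ)+1)/2^(d*m) := min_le_left _ _
          _ ≤ (k:ℝ)/2^(d*m) := by gcongr
          _ ≤ max ((j:ℝ)/2^(d*m)) ((k:ℝ)/2^(d*m)) := le_max_right _ _
        · have hjk' : ((k:ℝ)+1) ≤ (j:ℝ) := by exact_mod_cast h
          calc min (((j:ℝ)+1)/2^(d*m)) (((k:ℝ)+1)/2^(d*m))
              ≤ ((k:ℝ)+1)/2^(d*m) := min_le_right _ _
          _ ≤ (j:ℝ)/2^(d*m) := by gcongr
          _ ≤ max ((j:ℝ)/2^(d*m)) ((k:ℝ)/2^(d*m)) := le_max_left _ _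
      have hvolIoo : ∀ k : ℕ, volume (Set.Ioo ((k:ℝ)/2^(d*m)) (((k:ℝ)+1)/2^(d*m)))
          = ((2:ℝ≥0∞)^(d*m))⁻¹ := by
        intro k
        rw [Real.volume_Ioo]
        have h : ((k:ℝ)+1)/2^(d*m) - (k:ℝ)/2^(d*m) = (1:ℝ)/2^(d*m) := by field_simp; ring
        rw [h, ofReal_inv_two_pow]
      have hEq : (S.card : ℝ≥0∞) * ((2:ℝ≥0∞)^(d*m))⁻¹
          = volume (⋃ k ∈ S, Set.Ioo ((k:ℝ)/2^(d*m)) (((k:ℝ)+1)/2^(d*m))) := by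
        rw [measure_biUnion_finset hdisj (fun k _ => measurableSet_Ioo)]
        rw [Finset.sum_congr rfl (fun k _ => hvolIoo k), Finset.sum_const, nsmul_eq_mul]
      rw [hEq]
      have hsub2 : (⋃ k ∈ S, Set.Ioo ((k:ℝ)/2^(d*m)) (((k:ℝ)+1)/2^(d*m)))
          ⊆ Set.Icc (p - 1/2^(d*m)) (q + 1/2^(d*m)) := by
        refine Set.iUnion₂_subset fun k hk => ?_
        obtain ⟨-, h1, h2⟩ := Finset.mem_filter.mp hk
        refine Set.Ioo_subset_Icc_self.trans (Set.Icc_subset_Icc ?_ ?_)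
        · have : p ≤ ((k:ℝ)+1)/2^(d*m) := h1
          have hsplit : ((k:ℝ)+1)/2^(d*m) = (k:ℝ)/2^(d*m) + 1/2^(d*m) := by field_simp
          linarith [hsplit ▸ this]
        · have hsplit : ((k:ℝ)+1)/2^(d*m) = (k:ℝ)/2^(d*m) + 1/2^(d*m) := by field_simp
          rw [hsplit]
          linarith
      refine (measure_mono hsub2).trans ?_
      rw [Real.volume_Icc]
      apply ENNReal.ofReal_le_ofReal
      ring_nf
      linarith
    calc volume (H '' Set.Icc p q) ≤ _ := h1
    _ ≤ ENNReal.ofReal (q - p + 2 * (1/2^(d*m))) := h2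
    _ = ENNReal.ofReal (q - p) + ENNReal.ofReal (2 * (1/2^(d*m))) :=
        ENNReal.ofReal_add (by linarith) (by positivity)
  have hlim : Filter.Tendsto
      (fun m : ℕ => ENNReal.ofReal (q - p) + ENNReal.ofReal (2 * (1/2^(d*m))))
      atTop (𝓝 (ENNReal.ofReal (q - p) + 0)) := by
    refine Filter.Tendsto.add tendsto_const_nhds ?_
    rw [show (0:ℝ≥0∞) = ENNReal.ofReal 0 by simp]
    apply ENNReal.tendsto_ofReal
    have hbase : Filter.Tendsto (fun n : ℕ => ((2:ℝ)⁻¹)^n) atTop (𝓝 0) :=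
      tendsto_pow_atTop_nhds_zero_of_lt_one (by norm_num) (by norm_num)
    have hdm : Filter.Tendsto (fun m : ℕ => d*m) atTop atTop :=
      tendsto_atTop_mono (fun m => Nat.le_mul_of_pos_left m (by omega)) tendsto_id
    have := (hbase.comp hdm).const_mul (2:ℝ)
    simpa [Function.comp, div_eq_mul_inv, inv_pow, mul_comm] using this
  have := ge_of_tendsto' hlim key
  rwa [add_zero] at this

lemma open_bound (hH : IsHilbertCurve d H) (U : Set (EuclideanSpace ℝ (Fin d)))
    (hU : IsOpen U) :
    volume (H ⁻¹' U ∩ Set.Icc (0:ℝ) 1) ≤ volume U := by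
  classical
  set D : ℕ → Finset ℕ := fun m =>
    (Finset.range (2^(d*m))).filter (fun k => H '' dI d m k ⊆ U) with hD
  set B : ℕ → Set ℝ := fun m => ⋃ k ∈ D m, dI d m k with hB
  have hmono : Monotone B := by
    apply monotone_nat_of_le_succ
    intro m t ht
    simp only [hB, Set.mem_iUnion, exists_prop] at ht ⊢
    obtain ⟨k, hkD, htk⟩ := ht
    obtain ⟨hkN, hkU⟩ := Finset.mem_filter.mp hkD
    rw [Finset.mem_range] at hkN
    obtain ⟨k', hk', ht', hsub⟩ := dI_child d m k hkN htk
    refine ⟨k', Finset.mem_filter.mpr ⟨Finset.mem_range.mpr hk', ?_⟩, ht'⟩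
    exact (Set.image_mono (f := H) hsub).trans hkU
  have hcup : H ⁻¹' U ∩ Set.Icc (0:ℝ) 1 = ⋃ m, B m := by
    apply Set.Subset.antisymm
    · rintro t ⟨htU, ht01⟩
      obtain ⟨ε, hε, hball⟩ := Metric.isOpen_iff.mp hU (H t) htU
      obtain ⟨m, hm⟩ : ∃ m : ℕ, Real.sqrt d * (1/2^m) < ε := by
        obtain ⟨m, hm⟩ := pow_unbounded_of_one_lt (Real.sqrt d / ε) (by norm_num : (1:ℝ) < 2)
        refine ⟨m, ?_⟩
        rw [div_lt_iff₀ hε] at hm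
        have h2m : (0:ℝ) < 2^m := by positivity
        rw [mul_one_div, div_lt_iff₀ h2m]
        linarith
      obtain ⟨k, hk, htk⟩ := dI_cover d m ht01
      have himg : H '' dI d m k ⊆ U := by
        obtain ⟨a, ha⟩ := hH.2.2 m k hk
        have ha' : H '' dI d m k = (WithLp.ofLp : EuclideanSpace ℝ (Fin d) → (Fin d → ℝ)) ⁻¹' Set.univ.pi fun i => Set.Icc (a i) (a i + (1:ℝ)/2^m) := ha
        rw [ha']
        intro x hx
        apply hball
        have hHt : H t ∈ (WithLp.ofLp : EuclideanSpace ℝ (Fin d) → (Fin d → ℝ)) ⁻¹' Set.univ.pi fun i => Set.Icc (a i) (a i + (1:ℝ)/2^m) := by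
          rw [← ha']; exact ⟨t, htk, rfl⟩
        rw [Metric.mem_ball, EuclideanSpace.dist_eq]
        have hcoord : ∀ i : Fin d, dist (x i) (H t i) ^ 2 ≤ ((1:ℝ)/2^m)^2 := by
          intro i
          have h1 := hx i trivial
          have h2 := hHt i trivial
          have : |x i - H t i| ≤ (1:ℝ)/2^m := by
            rw [abs_sub_le_iff]
            constructor <;> [skip; skip] <;>
              simp only [Set.mem_Icc] at h1 h2 <;> linarith [h1.1, h1.2, h2.1, h2.2]
          have habs : dist (x i) (H t i) ≤ (1:ℝ)/2^m := by rwa [Real.dist_eq]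
          exact pow_le_pow_left₀ dist_nonneg habs 2
        calc Real.sqrt (∑ i, dist (x i) (H t i) ^ 2)
            ≤ Real.sqrt (d * ((1:ℝ)/2^m)^2) := by
              apply Real.sqrt_le_sqrt
              calc ∑ i, dist (x i) (H t i) ^ 2 ≤ ∑ _i : Fin d, ((1:ℝ)/2^m)^2 :=
                    Finset.sum_le_sum fun i _ => hcoord i
              _ = d * ((1:ℝ)/2^m)^2 := by rw [Finset.sum_const, Finset.card_univ,
                    Fintype.card_fin, nsmul_eq_mul]
        _ = Real.sqrt d * ((1:ℝ)/2^m) := by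
              rw [Real.sqrt_mul (by positivity), Real.sqrt_sq (by positivity)]
        _ < ε := hm
      refine Set.mem_iUnion.mpr ⟨m, ?_⟩
      simp only [hB, Set.mem_iUnion, exists_prop]
      exact ⟨k, Finset.mem_filter.mpr ⟨Finset.mem_range.mpr hk, himg⟩, htk⟩
    · refine Set.iUnion_subset fun m => ?_
      simp only [hB]
      refine Set.iUnion₂_subset fun k hkD => ?_
      obtain ⟨hkN, hkU⟩ := Finset.mem_filter.mp hkD
      rw [Finset.mem_range] at hkN
      intro t ht
      exact ⟨hkU ⟨t, ht, rfl⟩, dI_sub_unit d m k hkN ht⟩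
  rw [hcup, hmono.measure_iUnion]
  refine iSup_le fun m => ?_
  calc volume (B m) ≤ ∑ k ∈ D m, volume (dI d m k) := measure_biUnion_finset_le _ _
  _ = ((D m).card : ℝ≥0∞) * ((2:ℝ≥0∞)^(d*m))⁻¹ := by
      rw [Finset.sum_congr rfl (fun k _ => vol_dI d m k), Finset.sum_const, nsmul_eq_mul]
  _ ≤ volume (⋃ k ∈ D m, H '' dI d m k) :=
      cubes_lower hH m (D m) (Finset.filter_subset _ _)
  _ ≤ volume U := by
      refine measure_mono (Set.iUnion₂_subset fun k hk => ?_)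
      exact (Finset.mem_filter.mp hk).2

end Main

theorem hilbert_image_measure_and_uniform
    (d : ℕ) (hd : 1 ≤ d) (H : ℝ → EuclideanSpace ℝ (Fin d)) (hH : IsHilbertCurve d H)
    (p q : ℝ) (hp : 0 ≤ p) (hpq : p < q) (hq : q ≤ 1) :
    volume (H '' Set.Icc p q) = ENNReal.ofReal (q - p) ∧
    Measure.map H (unifOnReal (Set.Icc p q)) = unifOn (H '' Set.Icc p q) := by
  have hHc : Continuous H := hH.1
  have hHm : Measurable H := hHc.measurable
  set A : Set (EuclideanSpace ℝ (Fin d)) := H '' Set.Icc p q with hA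
  have hA_meas : MeasurableSet A := ((isCompact_Icc.image hHc).isClosed).measurableSet
  set ν : Measure (EuclideanSpace ℝ (Fin d)) :=
    Measure.map H (volume.restrict (Set.Icc p q)) with hν
  have hν_apply : ∀ E : Set (EuclideanSpace ℝ (Fin d)), MeasurableSet E →
      ν E = volume (H ⁻¹' E ∩ Set.Icc p q) := by
    intro E hE
    rw [hν, Measure.map_apply hHm hE, Measure.restrict_apply (hHm hE)]
  have hν_le : ∀ E : Set (EuclideanSpace ℝ (Fin d)), MeasurableSet E → ν E ≤ volume E := by
    intro E hE
    by_contra hlt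
    push_neg at hlt
    obtain ⟨U, hEU, hUopen, hUlt⟩ := Set.exists_isOpen_lt_of_lt E (ν E) hlt
    have h1 : ν E ≤ ν U := measure_mono hEU
    have h2 : ν U = volume (H ⁻¹' U ∩ Set.Icc p q) := hν_apply U hUopen.measurableSet
    have h3 : volume (H ⁻¹' U ∩ Set.Icc p q) ≤ volume (H ⁻¹' U ∩ Set.Icc (0:ℝ) 1) :=
      measure_mono (Set.inter_subset_inter_right _ (Set.Icc_subset_Icc hp hq))
    have h4 := open_bound hH U hUopen
    have : ν E ≤ volume U := h1.trans (h2 ▸ (h3.trans h4))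
    exact absurd (this.trans_lt hUlt) (lt_irrefl _)
  have hνA : ν A = ENNReal.ofReal (q - p) := by
    rw [hν_apply A hA_meas,
      Set.inter_eq_self_of_subset_right (Set.subset_preimage_image H _), Real.volume_Icc]
  have part1 : volume A = ENNReal.ofReal (q - p) :=
    le_antisymm (img_upper hd hH p q hp hpq.le hq) (hνA ▸ hν_le A hA_meas)
  have hν_eq : ν = volume.restrict A := by
    ext E hE
    rw [Measure.restrict_apply hE]
    have hsplit : ν E = ν (E ∩ A) + ν (E \ A) := (measure_inter_add_diff E hA_meas).symm
    have hdiff0 : ν (E \ A) = 0 := by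
      apply measure_mono_null (t := Aᶜ) (Set.diff_subset_compl E A)
      rw [hν_apply Aᶜ hA_meas.compl]
      have : H ⁻¹' Aᶜ ∩ Set.Icc p q = ∅ := by
        apply Set.eq_empty_of_forall_notMem
        rintro t ⟨htc, ht⟩
        exact htc (Set.mem_image_of_mem H ht)
      rw [this, measure_empty]
    have key : ν (E ∩ A) = volume (E ∩ A) := by
      have h1 : ν (E ∩ A) ≤ volume (E ∩ A) := hν_le _ (hE.inter hA_meas)
      have h2 : ν (A \ E) ≤ volume (A \ E) := hν_le _ (hA_meas.diff hE)
      have hsum : ν (E ∩ A) + ν (A \ E) = volume (E ∩ A) + volume (A \ E) := by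
        have hl : ν (E ∩ A) + ν (A \ E) = ν A := by
          rw [Set.inter_comm]; exact measure_inter_add_diff A hE
        have hr : volume (E ∩ A) + volume (A \ E) = volume A := by
          rw [Set.inter_comm]; exact measure_inter_add_diff A hE
        rw [hl, hr, hνA, part1]
      have hfin : volume (A \ E) ≠ ⊤ := by
        refine ne_top_of_le_ne_top ?_ (measure_mono Set.diff_subset)
        rw [part1]; exact ENNReal.ofReal_ne_top
      by_contra hne
      have hlt : ν (E ∩ A) < volume (E ∩ A) := lt_of_le_of_ne h1 hne
      have : ν (E ∩ A) + ν (A \ E) < volume (E ∩ A) + volume (A \ E) :=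
        ENNReal.add_lt_add_of_lt_of_le (ne_top_of_le_ne_top hfin h2) hlt h2
      exact absurd hsum (ne_of_lt this)
    rw [hsplit, hdiff0, add_zero, key]
  refine ⟨part1, ?_⟩
  rw [unifOnReal, unifOn, Real.volume_Icc, Measure.map_smul, ← hν, hν_eq, part1]
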